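/- Let (A, Ã) be a dual pair of closed densely defined operators on a complex Hilbert space H with the common core property (common core D), with A dissipative, and let V := ((A − Ã)/(2i))↾_D be its imaginary part. Let W_F = V_F^{1/2} and W_K = V_K^{1/2} be the square roots of the Friedrichs and Kreĭn–von Neumann extensions of V. Let 𝒱 ⊆ D(Ã*) with 𝒱 ∩ D(A) = {0} and L : 𝒱 → H linear, and assume 𝒱 ⊆ D(W_K). If the extension A_{𝒱,L} (domain D(A) ∔ 𝒱, acting as f + v ↦ Ã*(f+v) + Lv) is dissipative, then Lv ∈ ran(W_F) for every v ∈ 𝒱. -/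

import Mathlib

noncomputable section

open Complex

variable {H : Type*} [NormedAddCommGroup H] [InnerProductSpace ℂ H] [CompleteSpace H]

local notation "⟪" x ", " y "⟫" => @inner ℂ _ _ x y

/-- A partially defined operator is *dissipative* if `Im ⟪ψ, A ψ⟫ ≥ 0` for all `ψ` in its
domain. -/
def Dissipative (A : H →ₗ.[ℂ] H) : Prop :=
  ∀ ψ : A.domain, 0 ≤ (⟪(ψ : H), A ψ⟫).im

/-- A partially defined operator is *symmetric* if `⟪f, S g⟫ = ⟪S f, g⟫` on its domain. -/
def IsSymmetricP (S : H →ₗ.[ℂ] H) : Prop :=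
  ∀ f g : S.domain, ⟪(f : H), S g⟫ = ⟪S f, (g : H)⟫

/-- A partially defined operator is *non-negative* if `⟪f, V f⟫` is real and `≥ 0` on its
domain. -/
def NonnegP (V : H →ₗ.[ℂ] H) : Prop :=
  ∀ f : V.domain, (⟪(f : H), V f⟫).im = 0 ∧ 0 ≤ (⟪(f : H), V f⟫).re

/-- `T = W ∘ W` as partially defined operators: the domain of `T` is
`{x ∈ D(W) : W x ∈ D(W)}` and there `T x = W (W x)`. -/
def IsSqrtOf (W T : H →ₗ.[ℂ] H) : Prop :=
  (∀ x : H, x ∈ T.domain ↔ ∃ hx : x ∈ W.domain, W ⟨x, hx⟩ ∈ W.domain) ∧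
  ∀ (x : H) (hxT : x ∈ T.domain) (hxW : x ∈ W.domain) (hWx : W ⟨x, hxW⟩ ∈ W.domain),
    T ⟨x, hxT⟩ = W ⟨W ⟨x, hxW⟩, hWx⟩

/-- The Ando–Nishio supremum `sup { |⟪h, V f⟫|² / ⟪f, V f⟫ : f ∈ D(V), V f ≠ 0 }`,
computed in `[0, ∞]`. -/
def anSup (V : H →ₗ.[ℂ] H) (h : H) : ENNReal :=
  ⨆ f : {f : V.domain // V f ≠ 0},
    ENNReal.ofReal (‖⟪h, V f.1⟫‖ ^ 2) / ENNReal.ofReal ((⟪(f.1 : H), V f.1⟫).re)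

/-- `W` is the square root of the Friedrichs extension of `V`: `W` is a non-negative
selfadjoint operator, `W ∘ W` is a non-negative selfadjoint extension of `V`, and `D(V)` is a
core for `W`. -/
def IsFriedrichsSqrt (V W : H →ₗ.[ℂ] H) : Prop :=
  IsSelfAdjoint W ∧ NonnegP W ∧
    (∃ T : H →ₗ.[ℂ] H, IsSqrtOf W T ∧ IsSelfAdjoint T ∧ NonnegP T ∧ V ≤ T) ∧
    (W.domRestrict V.domain).closure = W

/-- `W` is the square root of the Kreĭn–von Neumann extension of `V` (Ando–Nishio
characterization): `W` is a non-negative selfadjoint operator, `W ∘ W` is a non-negative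
selfadjoint extension of `V`, the domain of `W` consists exactly of those `h` with
`anSup V h < ∞`, and `‖W h‖² = anSup V h` there. -/
def IsKreinSqrt (V W : H →ₗ.[ℂ] H) : Prop :=
  IsSelfAdjoint W ∧ NonnegP W ∧
    (∃ T : H →ₗ.[ℂ] H, IsSqrtOf W T ∧ IsSelfAdjoint T ∧ NonnegP T ∧ V ≤ T) ∧
    (∀ h : H, h ∈ W.domain ↔ anSup V h < ⊤) ∧
    ∀ (h : H) (hh : h ∈ W.domain), ENNReal.ofReal (‖W ⟨h, hh⟩‖ ^ 2) = anSup V h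


omit [CompleteSpace H] in
lemma pmap_apply_congr {f g : H →ₗ.[ℂ] H} (h : f = g) {x : H} (hf : x ∈ f.domain)
    (hg : x ∈ g.domain) : f ⟨x, hf⟩ = g ⟨x, hg⟩ := by subst h; rfl

lemma selfadj_symm {W : H →ₗ.[ℂ] H} (h : IsSelfAdjoint W) (x y : W.domain) :
    ⟪(W x : H), (y : H)⟫ = ⟪(x : H), W y⟫ := by
  have heq : W.adjoint = W := LinearPMap.isSelfAdjoint_def.mp h
  have hd : Dense (W.domain : Set H) := h.dense_domain
  have hx' : (x : H) ∈ W.adjoint.domain := by rw [heq]; exact x.2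
  have h2 := LinearPMap.adjoint_isFormalAdjoint hd ⟨(x : H), hx'⟩ y
  rwa [pmap_apply_congr heq hx' x.2, Subtype.coe_eta] at h2

omit [CompleteSpace H] in
lemma quad_bound (z e u k r : ℂ) (a M : ℝ)
    (hmain : ∀ μ : ℂ, 0 ≤ ((starRingEnd ℂ) μ * μ * z + (starRingEnd ℂ) μ * (e + u) +
      μ * ((starRingEnd ℂ) e + 2 * Complex.I * k) + r).im)
    (hz : z.im = a) (hk : ‖k‖ ^ 2 ≤ M * a) :
    ‖u‖ ^ 2 ≤ (16 * r.im + 8 * M) * a := by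
  have hd : 0 ≤ r.im := by simpa using hmain 0
  have h1 : ∀ t : ℝ, 0 ≤ a * (t * t) + (u.im + 2 * k.re) * t + r.im := by
    intro t
    have h := hmain (t : ℂ)
    simp only [Complex.add_im, Complex.mul_im, Complex.mul_re, Complex.conj_re, Complex.conj_im,
      Complex.I_re, Complex.I_im, Complex.ofReal_re, Complex.ofReal_im, Complex.add_re,
      Complex.conj_ofReal, Complex.re_ofNat, Complex.im_ofNat] at h
    nlinarith [h, hz]
  have h2 : ∀ t : ℝ, 0 ≤ a * (t * t) + (-(u.re) - 2 * k.im) * t + r.im := by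
    intro t
    have h := hmain ((t : ℂ) * Complex.I)
    simp only [map_mul, Complex.conj_ofReal, Complex.conj_I, Complex.add_im, Complex.mul_im,
      Complex.mul_re, Complex.conj_re, Complex.conj_im, Complex.I_re, Complex.I_im,
      Complex.ofReal_re, Complex.ofReal_im, Complex.add_re, Complex.neg_im, Complex.neg_re,
      Complex.re_ofNat, Complex.im_ofNat] at h
    nlinarith [h, hz]
  have d1 := discrim_le_zero h1
  have d2 := discrim_le_zero h2
  rw [discrim] at d1 d2
  have hknorm : ‖k‖ ^ 2 = k.re ^ 2 + k.im ^ 2 := by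
    rw [← Complex.normSq_eq_norm_sq, Complex.normSq_apply]; ring
  have hunorm : ‖u‖ ^ 2 = u.re ^ 2 + u.im ^ 2 := by
    rw [← Complex.normSq_eq_norm_sq, Complex.normSq_apply]; ring
  rw [hknorm] at hk
  rw [hunorm]
  nlinarith [d1, d2, hk, sq_nonneg (u.im + 4 * k.re), sq_nonneg (u.re + 4 * k.im), hd]


/-- If `𝓥 ⊆ D(V_K^{1/2})` and `A_{𝓥,L}` is dissipative, then
`L v ∈ ran(V_F^{1/2})` for all `v ∈ 𝓥`. -/
theorem statement9
    (A At V : H →ₗ.[ℂ] H) (D : Submodule ℂ H)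
    (hAdense : Dense (A.domain : Set H)) (hAtdense : Dense (At.domain : Set H))
    (hAclosed : A.IsClosed) (hAtclosed : At.IsClosed)
    (hdual : A ≤ At.adjoint)
    (hDA : D ≤ A.domain) (hDAt : D ≤ At.domain)
    (hcoreA : (A.domRestrict D).closure = A)
    (hcoreAt : (At.domRestrict D).closure = At)
    (hdiss : Dissipative A)
    (hVdom : V.domain = D)
    (hV : ∀ (x : H) (hxV : x ∈ V.domain) (hxA : x ∈ A.domain) (hxAt : x ∈ At.domain),
      V ⟨x, hxV⟩ = (2 * Complex.I)⁻¹ • (A ⟨x, hxA⟩ - At ⟨x, hxAt⟩))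
    (𝓥 : Submodule ℂ H) (h𝓥 : 𝓥 ≤ At.adjoint.domain) (h𝓥A : 𝓥 ⊓ A.domain = ⊥)
    (L : 𝓥 →ₗ[ℂ] H)
    (WF WK : H →ₗ.[ℂ] H)
    (hWF : IsFriedrichsSqrt V WF) (hWK : IsKreinSqrt V WK)
    (h𝓥K : ∀ v : 𝓥, (v : H) ∈ WK.domain)
    (hdissext : (∀ (f : A.domain) (v : 𝓥) (hfv : (f : H) + (v : H) ∈ At.adjoint.domain),
      0 ≤ (⟪(f : H) + (v : H), At.adjoint ⟨(f : H) + (v : H), hfv⟩ + L v⟫).im)) :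
    ∀ v : 𝓥, ∃ (g : H) (hg : g ∈ WF.domain), WF ⟨g, hg⟩ = L v := by
  obtain ⟨hsaW, hnnW, ⟨T, hsqT, hsaT, hnnT, hVT⟩, hcore⟩ := hWF
  obtain ⟨hsaK, hnnK, hsqK', hdomK, hnormK⟩ := hWK
  intro v
  have hvAd : (v : H) ∈ At.adjoint.domain := h𝓥 v.2
  -- basic facts about V and WF
  have hVinner : ∀ (x : H) (hxV : x ∈ V.domain) (hxW : x ∈ WF.domain),
      ⟪x, V ⟨x, hxV⟩⟫ = ((‖WF ⟨x, hxW⟩‖ ^ 2 : ℝ) : ℂ) := by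
    intro x hxV hxW
    have hxT : x ∈ T.domain := hVT.1 hxV
    obtain ⟨hxW', hWxW⟩ := (hsqT.1 x).mp hxT
    have h1 : V ⟨x, hxV⟩ = T ⟨x, hxT⟩ := hVT.2 rfl
    have h2 := hsqT.2 x hxT hxW' hWxW
    rw [h1, h2, ← selfadj_symm hsaW ⟨x, hxW'⟩ ⟨WF ⟨x, hxW'⟩, hWxW⟩]
    have h3 := inner_self_eq_norm_sq_to_K (𝕜 := ℂ) (WF ⟨x, hxW'⟩)
    rw [h3]
    norm_cast
  have hVzero : ∀ (x : H) (hxV : x ∈ V.domain) (hxW : x ∈ WF.domain),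
      WF ⟨x, hxW⟩ = 0 → V ⟨x, hxV⟩ = 0 := by
    intro x hxV hxW h0
    have hxT : x ∈ T.domain := hVT.1 hxV
    obtain ⟨hxW', hWxW⟩ := (hsqT.1 x).mp hxT
    have h1 : V ⟨x, hxV⟩ = T ⟨x, hxT⟩ := hVT.2 rfl
    have h2 := hsqT.2 x hxT hxW' hWxW
    rw [h1, h2]
    have h4 : (⟨WF ⟨x, hxW'⟩, hWxW⟩ : WF.domain) = 0 := Subtype.ext h0
    rw [h4, WF.map_zero]
  -- Krein bound
  have hM0 : (0:ℝ) ≤ ‖WK ⟨(v : H), h𝓥K v⟩‖ ^ 2 := sq_nonneg _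
  have hKb : ∀ (x : H) (hxV : x ∈ V.domain) (hxW : x ∈ WF.domain),
      ‖⟪(v : H), V ⟨x, hxV⟩⟫‖ ^ 2 ≤ ‖WK ⟨(v : H), h𝓥K v⟩‖ ^ 2 * ‖WF ⟨x, hxW⟩‖ ^ 2 := by
    intro x hxV hxW
    by_cases hVx : V ⟨x, hxV⟩ = 0
    · rw [hVx]
      simp only [inner_zero_right, norm_zero, ne_eq, OfNat.ofNat_ne_zero, not_false_eq_true,
        zero_pow]
      positivity
    · have hle : ENNReal.ofReal (‖⟪(v : H), V ⟨x, hxV⟩⟫‖ ^ 2) /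
          ENNReal.ofReal ((⟪x, V ⟨x, hxV⟩⟫).re) ≤ anSup V (v : H) :=
        le_iSup (fun f : {f : V.domain // V f ≠ 0} =>
          ENNReal.ofReal (‖⟪(v : H), V f.1⟫‖ ^ 2) / ENNReal.ofReal ((⟪(f.1 : H), V f.1⟫).re))
          (⟨⟨x, hxV⟩, hVx⟩ : {f : V.domain // V f ≠ 0})
      rw [← hnormK (v : H) (h𝓥K v)] at hle
      have haW : (⟪x, V ⟨x, hxV⟩⟫).re = ‖WF ⟨x, hxW⟩‖ ^ 2 := by
        rw [hVinner x hxV hxW, Complex.ofReal_re]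
      rw [haW] at hle
      have ha0 : ‖WF ⟨x, hxW⟩‖ ^ 2 ≠ 0 := by
        intro h0
        exact hVx (hVzero x hxV hxW (by simpa using h0))
      have h1 : ENNReal.ofReal (‖WF ⟨x, hxW⟩‖ ^ 2) ≠ 0 := by
        rw [Ne, ENNReal.ofReal_eq_zero, not_le]
        exact lt_of_le_of_ne (sq_nonneg _) (Ne.symm ha0)
      rw [ENNReal.div_le_iff h1 ENNReal.ofReal_ne_top, ← ENNReal.ofReal_mul hM0] at hle
      exact (ENNReal.ofReal_le_ofReal_iff (by positivity)).mp hle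
  -- dissipativity: the quadratic form inequality
  have hd0 : 0 ≤ (⟪(v : H), At.adjoint ⟨(v : H), hvAd⟩ + L v⟫).im := by
    have hmem0 : ((0 : A.domain) : H) + (v : H) ∈ At.adjoint.domain := by
      rw [ZeroMemClass.coe_zero, zero_add]; exact hvAd
    have key0 : ∀ (w w' : H) (_ : w = w') (hw : w ∈ At.adjoint.domain)
        (hw' : w' ∈ At.adjoint.domain),
        (⟪w, At.adjoint ⟨w, hw⟩ + L v⟫).im = (⟪w', At.adjoint ⟨w', hw'⟩ + L v⟫).im := by
      rintro w w' rfl hw hw'; rfl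
    have h0 := hdissext 0 v hmem0
    rwa [key0 (((0 : A.domain) : H) + (v : H)) (v : H) (by simp) hmem0 hvAd] at h0
  -- the main bound
  have key : ∀ (x : H) (hxV : x ∈ V.domain) (hxW : x ∈ WF.domain),
      ‖⟪x, (L v : H)⟫‖ ^ 2 ≤ (16 * (⟪(v : H), At.adjoint ⟨(v : H), hvAd⟩ + L v⟫).im +
        8 * ‖WK ⟨(v : H), h𝓥K v⟩‖ ^ 2) * ‖WF ⟨x, hxW⟩‖ ^ 2 := by
    intro x hxV hxW
    have hxD : x ∈ D := hVdom ▸ hxV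
    have hxA : x ∈ A.domain := hDA hxD
    have hxAt : x ∈ At.domain := hDAt hxD
    have hxAd : x ∈ At.adjoint.domain := hdual.1 hxA
    have hAsplit : A ⟨x, hxA⟩ = At ⟨x, hxAt⟩ + (2 * Complex.I) • V ⟨x, hxV⟩ := by
      have h := hV x hxV hxA hxAt
      have h2 : (2 * Complex.I) • V ⟨x, hxV⟩ = A ⟨x, hxA⟩ - At ⟨x, hxAt⟩ := by
        rw [h, smul_smul, mul_inv_cancel₀ (by simp : (2 * Complex.I) ≠ 0), one_smul]
      rw [h2]; abel
    have hAdx : A ⟨x, hxA⟩ = At.adjoint ⟨x, hxAd⟩ := hdual.2 rfl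
    have hq : ⟪(v : H), A ⟨x, hxA⟩⟫ =
        (starRingEnd ℂ) ⟪x, At.adjoint ⟨(v : H), hvAd⟩⟫ +
          2 * Complex.I * ⟪(v : H), V ⟨x, hxV⟩⟫ := by
      rw [hAsplit, inner_add_right, inner_smul_right]
      congr 1
      have hfa := LinearPMap.adjoint_isFormalAdjoint hAtdense ⟨(v : H), hvAd⟩ ⟨x, hxAt⟩
      rw [← hfa, ← inner_conj_symm]
    have hmain : ∀ μ : ℂ, 0 ≤ ((starRingEnd ℂ) μ * μ * ⟪x, A ⟨x, hxA⟩⟫ +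
        (starRingEnd ℂ) μ * (⟪x, At.adjoint ⟨(v : H), hvAd⟩⟫ + ⟪x, (L v : H)⟫) +
        μ * ((starRingEnd ℂ) ⟪x, At.adjoint ⟨(v : H), hvAd⟩⟫ +
          2 * Complex.I * ⟪(v : H), V ⟨x, hxV⟩⟫) +
        ⟪(v : H), At.adjoint ⟨(v : H), hvAd⟩ + L v⟫).im := by
      intro μ
      have hμxA : μ • x ∈ A.domain := A.domain.smul_mem μ hxA
      have hμAd : μ • x ∈ At.adjoint.domain := hdual.1 hμxA
      have hfv : ((⟨μ • x, hμxA⟩ : A.domain) : H) + (v : H) ∈ At.adjoint.domain :=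
        At.adjoint.domain.add_mem hμAd hvAd
      have h0 := hdissext ⟨μ • x, hμxA⟩ v hfv
      have hsub : (⟨((⟨μ • x, hμxA⟩ : A.domain) : H) + (v : H), hfv⟩ : At.adjoint.domain) =
          μ • ⟨x, hxAd⟩ + ⟨(v : H), hvAd⟩ := Subtype.ext rfl
      rw [hsub, At.adjoint.map_add, At.adjoint.map_smul, ← hAdx] at h0
      have hexp : ⟪((⟨μ • x, hμxA⟩ : A.domain) : H) + (v : H),
          (μ • A ⟨x, hxA⟩ + At.adjoint ⟨(v : H), hvAd⟩) + L v⟫ =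
          (starRingEnd ℂ) μ * μ * ⟪x, A ⟨x, hxA⟩⟫ +
          (starRingEnd ℂ) μ * (⟪x, At.adjoint ⟨(v : H), hvAd⟩⟫ + ⟪x, (L v : H)⟫) +
          μ * ((starRingEnd ℂ) ⟪x, At.adjoint ⟨(v : H), hvAd⟩⟫ +
            2 * Complex.I * ⟪(v : H), V ⟨x, hxV⟩⟫) +
          ⟪(v : H), At.adjoint ⟨(v : H), hvAd⟩ + L v⟫ := by
        have hcoe : ((⟨μ • x, hμxA⟩ : A.domain) : H) = μ • x := rfl
        rw [hcoe]
        simp only [inner_add_left, inner_add_right, inner_smul_left, inner_smul_right, hq]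
        ring
      rw [hexp] at h0
      exact h0
    have hVin := hVinner x hxV hxW
    have hzim : (⟪x, A ⟨x, hxA⟩⟫).im = ‖WF ⟨x, hxW⟩‖ ^ 2 := by
      have hconj : (starRingEnd ℂ) ⟪x, A ⟨x, hxA⟩⟫ =
          ⟪x, A ⟨x, hxA⟩⟫ - 2 * Complex.I * ((‖WF ⟨x, hxW⟩‖ ^ 2 : ℝ) : ℂ) := by
        rw [inner_conj_symm, hAdx,
          LinearPMap.adjoint_isFormalAdjoint hAtdense ⟨x, hxAd⟩ ⟨x, hxAt⟩]
        have h5 : At ⟨x, hxAt⟩ = A ⟨x, hxA⟩ - (2 * Complex.I) • V ⟨x, hxV⟩ := by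
          rw [hAsplit]; abel
        rw [h5, inner_sub_right, inner_smul_right, hVin, ← hAdx]
      have h6 := congrArg Complex.im hconj
      simp only [Complex.conj_im, Complex.sub_im, Complex.mul_im, Complex.mul_re,
        Complex.I_re, Complex.I_im, Complex.ofReal_re, Complex.ofReal_im,
        Complex.re_ofNat, Complex.im_ofNat] at h6
      linarith
    exact quad_bound _ _ _ _ _ _ _ hmain hzim (hKb x hxV hxW)
  -- convert to a linear bound with constant C
  set d : ℝ := (⟪(v : H), At.adjoint ⟨(v : H), hvAd⟩ + L v⟫).im with hdd
  set M : ℝ := ‖WK ⟨(v : H), h𝓥K v⟩‖ ^ 2 with hMM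
  set C : ℝ := Real.sqrt (16 * d + 8 * M) with hCC
  have hCb : ∀ (x : H) (hxV : x ∈ V.domain) (hxW : x ∈ WF.domain),
      ‖⟪(L v : H), x⟫‖ ≤ C * ‖WF ⟨x, hxW⟩‖ := by
    intro x hxV hxW
    have h := key x hxV hxW
    have h1 : ‖⟪(L v : H), x⟫‖ = ‖⟪x, (L v : H)⟫‖ := by
      rw [← inner_conj_symm, RCLike.norm_conj]
    rw [h1]
    have h2 : ‖⟪x, (L v : H)⟫‖ = Real.sqrt (‖⟪x, (L v : H)⟫‖ ^ 2) :=
      (Real.sqrt_sq (norm_nonneg _)).symm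
    rw [h2, hCC]
    calc Real.sqrt (‖⟪x, (L v : H)⟫‖ ^ 2) ≤
        Real.sqrt ((16 * d + 8 * M) * ‖WF ⟨x, hxW⟩‖ ^ 2) := Real.sqrt_le_sqrt h
      _ = Real.sqrt (16 * d + 8 * M) * ‖WF ⟨x, hxW⟩‖ := by
          rw [Real.sqrt_mul (by linarith), Real.sqrt_sq (norm_nonneg _)]
  -- the functional construction
  set S : H →ₗ.[ℂ] H := WF.domRestrict V.domain with hSS
  have hSmem : ∀ x : S.domain, (x : H) ∈ V.domain ∧ (x : H) ∈ WF.domain := fun x => x.2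
  have hSW : ∀ x : S.domain, S x = WF ⟨(x : H), (hSmem x).2⟩ := by
    intro x
    exact LinearPMap.domRestrict_apply rfl
  set ψ : S.domain →ₗ[ℂ] ℂ := (innerₛₗ ℂ (L v : H)).comp S.domain.subtype with hψψ
  have hψa : ∀ x : S.domain, ψ x = ⟪(L v : H), (x : H)⟫ := fun x => rfl
  have hψb : ∀ x : S.domain, ‖ψ x‖ ≤ C * ‖S x‖ := by
    intro x
    rw [hψa, hSW x]
    exact hCb (x : H) (hSmem x).1 (hSmem x).2
  have hker : LinearMap.ker S.toFun ≤ LinearMap.ker ψ := by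
    intro x hx
    rw [LinearMap.mem_ker] at hx ⊢
    have := hψb x
    rw [show S x = S.toFun x from rfl, hx] at this
    simpa using norm_le_zero_iff.mp (by simpa using this)
  set ℓ₀ : LinearMap.range S.toFun →ₗ[ℂ] ℂ :=
    ((LinearMap.ker S.toFun).liftQ ψ hker).comp S.toFun.quotKerEquivRange.symm.toLinearMap
    with hℓ₀
  have hℓ₀a : ∀ x : S.domain, ℓ₀ ⟨S x, LinearMap.mem_range_self _ x⟩ = ψ x := by
    intro x
    have h1 : S.toFun.quotKerEquivRange.symm ⟨S.toFun x, LinearMap.mem_range_self _ x⟩ =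
        (LinearMap.ker S.toFun).mkQ x := LinearMap.quotKerEquivRange_symm_apply_image _ _ _
    rw [hℓ₀]
    simp only [LinearMap.coe_comp, LinearEquiv.coe_toLinearMap, Function.comp_apply]
    rw [show (⟨S x, LinearMap.mem_range_self _ x⟩ : LinearMap.range S.toFun) =
      ⟨S.toFun x, LinearMap.mem_range_self _ x⟩ from rfl, h1]
    simp [Submodule.mkQ_apply, Submodule.liftQ_apply]
  have hℓ₀b : ∀ y : LinearMap.range S.toFun, ‖ℓ₀ y‖ ≤ C * ‖(y : H)‖ := by
    rintro ⟨y, hy⟩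
    obtain ⟨x, rfl⟩ := hy
    have h2 : (⟨S.toFun x, LinearMap.mem_range_self _ x⟩ : LinearMap.range S.toFun) =
        ⟨S x, LinearMap.mem_range_self _ x⟩ := rfl
    rw [h2, hℓ₀a]
    exact hψb x
  set ℓ : LinearMap.range S.toFun →L[ℂ] ℂ := LinearMap.mkContinuous ℓ₀ C hℓ₀b with hℓℓ
  obtain ⟨G, hG, -⟩ := exists_extension_norm_eq (LinearMap.range S.toFun) ℓ
  set u₀ : H := (InnerProductSpace.toDual ℂ H).symm G with hu₀
  have base : ∀ x : S.domain, ⟪(L v : H), (x : H)⟫ = ⟪u₀, S x⟫ := by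
    intro x
    have h1 : ⟪u₀, S x⟫ = G (S x) := InnerProductSpace.toDual_symm_apply
    rw [h1, show S x = ((⟨S x, LinearMap.mem_range_self _ x⟩ : LinearMap.range S.toFun) : H)
      from rfl, hG]
    rw [hℓℓ]
    exact ((hℓ₀a x).trans (hψa x)).symm
  -- pass to all of WF.domain via the core property
  have h_all : ∀ y : WF.domain, ⟪(L v : H), (y : H)⟫ = ⟪u₀, WF y⟫ := by
    by_cases hcl : S.IsClosable
    · intro y
      have hgr : WF.graph = S.graph.topologicalClosure := by
        rw [← hcore, hcl.graph_closure_eq_closure_graph]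
      have hy : ((y : H), WF y) ∈ closure (S.graph : Set (H × H)) := by
        have := WF.mem_graph y
        rw [hgr] at this
        exact this
      rw [mem_closure_iff_seq_limit] at hy
      obtain ⟨seq, hseqmem, hseqlim⟩ := hy
      choose xs hxs using fun n => S.mem_graph_iff.mp (hseqmem n)
      have h1 : Filter.Tendsto (fun n => ((xs n : H))) Filter.atTop (nhds (y : H)) := by
        have := (continuous_fst.tendsto _).comp hseqlim
        simpa [Function.comp, Function.comp_def, fun n => (hxs n).symm] using this
      have h2 : Filter.Tendsto (fun n => S (xs n)) Filter.atTop (nhds (WF y)) := by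
        have := (continuous_snd.tendsto _).comp hseqlim
        simpa [Function.comp, Function.comp_def, fun n => (hxs n).symm] using this
      have hA1 : Filter.Tendsto (fun n => ⟪(L v : H), (xs n : H)⟫) Filter.atTop
          (nhds ⟪(L v : H), (y : H)⟫) := tendsto_const_nhds.inner h1
      have hA2 : Filter.Tendsto (fun n => ⟪u₀, S (xs n)⟫) Filter.atTop
          (nhds ⟪u₀, WF y⟫) := tendsto_const_nhds.inner h2
      have hA1' : Filter.Tendsto (fun n => ⟪(L v : H), (xs n : H)⟫) Filter.atTop
          (nhds ⟪u₀, WF y⟫) := by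
        have heq : (fun n => ⟪(L v : H), (xs n : H)⟫) = fun n => ⟪u₀, S (xs n)⟫ :=
          funext fun n => base (xs n)
        rw [heq]
        exact hA2
      exact tendsto_nhds_unique hA1 hA1'
    · have hSW' : S = WF := by
        rw [← hcore, LinearPMap.closure_def' hcl]
      intro y
      have hy : (y : H) ∈ S.domain := by rw [hSW']; exact y.2
      have := base ⟨(y : H), hy⟩
      rwa [pmap_apply_congr hSW' hy y.2, Subtype.coe_eta] at this
  -- conclude via the adjoint
  have hu₀mem : u₀ ∈ WF.adjoint.domain :=
    LinearPMap.mem_adjoint_domain_of_exists _ ⟨L v, fun x => h_all x⟩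
  have hdW : Dense (WF.domain : Set H) := hsaW.dense_domain
  have happly : WF.adjoint ⟨u₀, hu₀mem⟩ = L v :=
    LinearPMap.adjoint_apply_eq hdW ⟨u₀, hu₀mem⟩ fun x => h_all x
  have hsaW' : WF.adjoint = WF := LinearPMap.isSelfAdjoint_def.mp hsaW
  have hu₀W : u₀ ∈ WF.domain := by rw [← hsaW']; exact hu₀mem
  exact ⟨u₀, hu₀W, by rw [← pmap_apply_congr hsaW' hu₀mem hu₀W]; exact happly⟩
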